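/- For any positive integers n and k with k dividing n, and any probability vector p = (p_1, …, p_k) with p_i > 0 for all i, there exists a real number r with 0 ≤ r ≤ k²/n such that the multinomial probability of the balanced outcome satisfies (n! / ((n/k)!)^k) · ∏_{i∈[k]} p_i^{n/k} = e^{−r} · (k^{k/2} / (2πn)^{(k−1)/2}) · e^{−n·KL}, where KL = ∑_{i∈[k]} (1/k) · ln((1/k)/p_i). -/

import Mathlib

open Finset Filter Real Stirling
open scoped Topology

noncomputable def θ (x : ℕ) : ℝ := Real.log (stirlingSeq x) - Real.log (Real.sqrt Real.pi)

lemma log_stirling_tendsto :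
    Tendsto (fun N => Real.log (stirlingSeq N)) atTop (𝓝 (Real.log (Real.sqrt Real.pi))) :=
  ((Real.continuousAt_log (by positivity)).tendsto).comp tendsto_stirlingSeq_sqrt_pi

lemma theta_nonneg (m : ℕ) : 0 ≤ θ (m + 1) := by
  have h : Real.log (Real.sqrt Real.pi) ≤ Real.log (stirlingSeq (m + 1)) := by
    have := log_stirlingSeq'_antitone.le_of_tendsto
      (log_stirling_tendsto.comp (tendsto_add_atTop_nat 1)) m
    simpa using this
  simpa [θ] using sub_nonneg.mpr h

lemma theta_antitone {a b : ℕ} (h : a ≤ b) : θ (b + 1) ≤ θ (a + 1) := by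
  have h2 := log_stirlingSeq'_antitone h
  simp only [Function.comp, Nat.succ_eq_add_one] at h2
  simp only [θ]
  linarith

lemma theta_le (m : ℕ) : θ (m + 1) ≤ 1 / (2 * ((m : ℝ) + 1)) := by
  set f : ℕ → ℝ := fun j => 1/4 * (1 / ((m : ℝ) + j + 1/2)) with hf
  have key : ∀ N : ℕ, Real.log (stirlingSeq (m + 1)) - Real.log (stirlingSeq (m + 1 + N)) ≤
      1 / (2 * ((m : ℝ) + 1)) := by
    intro N
    have htel : Real.log (stirlingSeq (m + 1)) - Real.log (stirlingSeq (m + 1 + N)) =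
        ∑ j ∈ range N, (Real.log (stirlingSeq (m + 1 + j)) - Real.log (stirlingSeq (m + 1 + (j+1)))) := by
      rw [Finset.sum_range_sub' (fun j => Real.log (stirlingSeq (m + 1 + j)))]
    rw [htel]
    have hstep : ∀ j ∈ range N,
        Real.log (stirlingSeq (m + 1 + j)) - Real.log (stirlingSeq (m + 1 + (j+1))) ≤
          f j - f (j+1) := by
      intro j _
      have h1 := log_stirlingSeq_sub_log_stirlingSeq_succ (m + j + 1)
      have e1 : m + j + 1 = m + 1 + j := by ring
      have e2 : m + j + 1 + 1 = m + 1 + (j + 1) := by ring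
      rw [e2, e1] at h1
      refine h1.trans ?_
      simp only [hf]
      have hj : (0:ℝ) ≤ (j:ℝ) := Nat.cast_nonneg j
      have hm : (0:ℝ) ≤ (m:ℝ) := Nat.cast_nonneg m
      push_cast
      have ha : (0:ℝ) < (m:ℝ) + j + 1/2 := by linarith
      have hb : (0:ℝ) < (m:ℝ) + (j+1) + 1/2 := by linarith
      rw [show (1:ℝ)/4 * (1/((m:ℝ)+j+1/2)) - 1/4*(1/((m:ℝ)+(j+1)+1/2))
            = (((m:ℝ)+(j+1)+1/2) - ((m:ℝ)+j+1/2))/(4*(((m:ℝ)+j+1/2)*((m:ℝ)+(j+1)+1/2)))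
          from by field_simp,
        div_le_div_iff₀ (by positivity) (by positivity)]
      nlinarith
    calc ∑ j ∈ range N, (Real.log (stirlingSeq (m + 1 + j)) - Real.log (stirlingSeq (m + 1 + (j+1))))
        ≤ ∑ j ∈ range N, (f j - f (j+1)) := Finset.sum_le_sum hstep
      _ = f 0 - f N := Finset.sum_range_sub' f N
      _ ≤ 1 / (2 * ((m : ℝ) + 1)) := by
          simp only [hf]
          have hm : (0:ℝ) ≤ (m:ℝ) := Nat.cast_nonneg m
          have hN : (0:ℝ) ≤ (N:ℝ) := Nat.cast_nonneg N
          push_cast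
          have ha : (0:ℝ) < (m:ℝ) + 0 + 1/2 := by linarith
          have hb : (0:ℝ) < (m:ℝ) + N + 1/2 := by linarith
          rw [show (1:ℝ)/4 * (1/((m:ℝ)+0+1/2)) - 1/4*(1/((m:ℝ)+N+1/2))
                = (((m:ℝ)+N+1/2) - ((m:ℝ)+0+1/2))/(4*(((m:ℝ)+0+1/2)*((m:ℝ)+N+1/2)))
              from by field_simp,
            div_le_div_iff₀ (by positivity) (by positivity)]
          nlinarith
  have hlim : Tendsto (fun N => Real.log (stirlingSeq (m + 1)) - Real.log (stirlingSeq (m + 1 + N)))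
      atTop (𝓝 (θ (m + 1))) := by
    have h0 := log_stirling_tendsto.comp (tendsto_add_atTop_nat (m + 1))
    simp only [Function.comp_def] at h0
    have h2 := (tendsto_const_nhds (x := Real.log (stirlingSeq (m+1)))).sub h0
    simp only [θ]
    convert h2 using 2 with N
    · simp [Function.comp, add_comm]
  exact le_of_tendsto hlim (Filter.Eventually.of_forall key)

lemma core (k m : ℕ) (hk : 0 < k) (hm : 0 < m) :
    (((k*m).factorial : ℝ)) / ((m.factorial : ℝ))^k =
      Real.exp (-((k:ℝ) * θ m - θ (k*m))) *
        ((k:ℝ) ^ ((k:ℝ)/2) / (2*Real.pi*((k:ℝ)*(m:ℝ))) ^ (((k:ℝ)-1)/2)) * (k:ℝ)^(k*m) := by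
  have hkm : 0 < k * m := Nat.mul_pos hk hm
  have hk' : (0:ℝ) < k := by exact_mod_cast hk
  have hm' : (0:ℝ) < m := by exact_mod_cast hm
  have hsm : 0 < stirlingSeq m := by
    have := stirlingSeq'_pos (m-1); rwa [Nat.sub_add_cancel hm] at this
  have hsn : 0 < stirlingSeq (k*m) := by
    have := stirlingSeq'_pos (k*m-1); rwa [Nat.sub_add_cancel hkm] at this
  have hfm : (0:ℝ) < (m.factorial : ℝ) := by exact_mod_cast m.factorial_pos
  have hfn : (0:ℝ) < ((k*m).factorial : ℝ) := by exact_mod_cast (k*m).factorial_pos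
  have hpi := Real.pi_pos
  have hLpos : (0:ℝ) < (((k*m).factorial : ℝ)) / ((m.factorial : ℝ))^k := by positivity
  have hRpos : (0:ℝ) < Real.exp (-((k:ℝ) * θ m - θ (k*m))) *
        ((k:ℝ) ^ ((k:ℝ)/2) / (2*Real.pi*((k:ℝ)*(m:ℝ))) ^ (((k:ℝ)-1)/2)) * (k:ℝ)^(k*m) := by
    positivity
  rw [← Real.exp_log hLpos, ← Real.exp_log hRpos]
  congr 1
  have fm := log_stirlingSeq_formula m
  have fn := log_stirlingSeq_formula (k*m)
  rw [Real.log_div hfn.ne' (by positivity), Real.log_pow,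
      Real.log_mul (by positivity) (by positivity),
      Real.log_mul (Real.exp_pos _).ne' (by positivity),
      Real.log_exp, Real.log_div (by positivity) (by positivity),
      Real.log_rpow hk', Real.log_rpow (by positivity), Real.log_pow]
  simp only [θ]
  push_cast at fm fn ⊢
  have h2m : Real.log (2*(m:ℝ)) = Real.log 2 + Real.log m :=
    Real.log_mul two_ne_zero hm'.ne'
  have h2n : Real.log (2*((k:ℝ)*m)) = Real.log 2 + (Real.log k + Real.log m) := by
    rw [Real.log_mul two_ne_zero (by positivity), Real.log_mul hk'.ne' hm'.ne']
  have hdm : Real.log ((m:ℝ)/Real.exp 1) = Real.log m - 1 := by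
    rw [Real.log_div hm'.ne' (Real.exp_ne_zero 1), Real.log_exp]
  have hdn : Real.log ((k:ℝ)*m/Real.exp 1) = Real.log k + Real.log m - 1 := by
    rw [Real.log_div (by positivity) (Real.exp_ne_zero 1), Real.log_exp,
      Real.log_mul hk'.ne' hm'.ne']
  have h2pin : Real.log (2*Real.pi*((k:ℝ)*m))
      = Real.log 2 + Real.log Real.pi + (Real.log k + Real.log m) := by
    rw [Real.log_mul (by positivity) (by positivity), Real.log_mul two_ne_zero hpi.ne',
      Real.log_mul hk'.ne' hm'.ne']
  have hsq : Real.log (Real.sqrt Real.pi) = Real.log Real.pi / 2 := Real.log_sqrt hpi.le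
  rw [h2m, hdm] at fm
  rw [h2n, hdn] at fn
  rw [h2pin, hsq]
  linear_combination (-1:ℝ)*fn + (k:ℝ)*fm

/-- **Stirling estimate for the balanced multinomial probability.**
For any positive integers `n` and `k` with `k ∣ n`, and any probability vector `p`
with strictly positive entries, there is `r ∈ [0, k²/n]` such that
`(n! / ((n/k)!)^k) · ∏_i p_i^{n/k}
  = e^{-r} · (k^{k/2} / (2πn)^{(k-1)/2}) · e^{-n·KL}`,
where `KL = ∑_i (1/k)·ln((1/k)/p_i)`. -/
theorem multinomial_balanced_mass_estimate
    (k n : ℕ) (hk : 0 < k) (hn : 0 < n) (hdvd : k ∣ n)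
    (p : Fin k → ℝ) (hp : ∀ i, 0 < p i) (hsum : ∑ i, p i = 1) :
    ∃ r : ℝ, 0 ≤ r ∧ r ≤ (k : ℝ) ^ 2 / (n : ℝ) ∧
      (n.factorial : ℝ) / ((n / k).factorial : ℝ) ^ k * ∏ i, p i ^ (n / k) =
        Real.exp (-r) *
          ((k : ℝ) ^ ((k : ℝ) / 2) / (2 * Real.pi * n) ^ (((k : ℝ) - 1) / 2)) *
          Real.exp (-(n : ℝ) *
            ∑ i, (1 / (k : ℝ)) * Real.log ((1 / (k : ℝ)) / p i)) := by
  obtain ⟨m, rfl⟩ := hdvd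
  have hm : 0 < m := by
    rcases Nat.eq_zero_or_pos m with h | h
    · subst h; simp at hn
    · exact h
  obtain ⟨m', rfl⟩ : ∃ m', m = m' + 1 := ⟨m - 1, (Nat.succ_pred_eq_of_pos hm).symm⟩
  have hk' : (0:ℝ) < k := by exact_mod_cast hk
  have hk1 : (1:ℝ) ≤ k := by exact_mod_cast hk
  have hdivk : k * (m' + 1) / k = m' + 1 := Nat.mul_div_cancel_left _ hk
  rw [hdivk]
  have h1 : m' + 1 ≤ k * (m' + 1) := Nat.le_mul_of_pos_left _ hk
  have e : k * (m' + 1) - 1 + 1 = k * (m' + 1) := by omega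
  have tn0 : 0 ≤ θ (k * (m' + 1)) := by
    have := theta_nonneg (k * (m' + 1) - 1); rwa [e] at this
  have tmn : θ (k * (m' + 1)) ≤ θ (m' + 1) := by
    have := theta_antitone (a := m') (b := k * (m' + 1) - 1) (by omega)
    rwa [e] at this
  have tm0 : 0 ≤ θ (m' + 1) := le_trans tn0 tmn
  have tmle : θ (m' + 1) ≤ 1 / (2 * ((m' : ℝ) + 1)) := theta_le m'
  have hm1 : (0:ℝ) < (m' : ℝ) + 1 := by positivity
  refine ⟨(k:ℝ) * θ (m' + 1) - θ (k * (m' + 1)), ?_, ?_, ?_⟩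
  · nlinarith
  · push_cast
    have heq : (k:ℝ)^2 / ((k:ℝ) * ((m':ℝ) + 1)) = (k:ℝ) / ((m':ℝ) + 1) := by
      field_simp
    rw [heq]
    have hb : (k:ℝ) * θ (m' + 1) ≤ (k:ℝ) * (1 / (2 * ((m':ℝ) + 1))) :=
      mul_le_mul_of_nonneg_left tmle hk'.le
    have hc : (k:ℝ) * (1 / (2 * ((m':ℝ) + 1))) ≤ (k:ℝ) / ((m':ℝ) + 1) := by
      rw [mul_one_div]
      gcongr
      linarith
    linarith
  · -- main equality
    have hc := core k (m' + 1) hk hm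
    have hplog : ∀ i, Real.log ((1/(k:ℝ))/p i) = -Real.log k - Real.log (p i) := by
      intro i
      rw [Real.log_div (by positivity) (hp i).ne', Real.log_div one_ne_zero hk'.ne',
        Real.log_one]
      ring
    have hsum1 : ∑ i, (1/(k:ℝ)) * Real.log ((1/(k:ℝ))/p i)
        = -Real.log k - (1/(k:ℝ)) * ∑ i, Real.log (p i) := by
      simp_rw [hplog]
      rw [← Finset.mul_sum, Finset.sum_sub_distrib, Finset.sum_const, Finset.card_univ,
        Fintype.card_fin]
      field_simp
      ring
    have hKL : Real.exp (-(((k * (m' + 1) : ℕ)):ℝ) * ∑ i, (1/(k:ℝ)) * Real.log ((1/(k:ℝ))/p i))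
        = (k:ℝ)^(k * (m' + 1)) * ∏ i, p i ^ (m' + 1) := by
      rw [hsum1]
      have harg : -(((k * (m' + 1) : ℕ)):ℝ) * (-Real.log k - (1/(k:ℝ)) * ∑ i, Real.log (p i))
          = (((k * (m' + 1) : ℕ)):ℝ) * Real.log k + ∑ i, (((m' + 1 : ℕ)):ℝ) * Real.log (p i) := by
        rw [← Finset.mul_sum]
        push_cast
        field_simp
        ring
      rw [harg, Real.exp_add, Real.exp_sum]
      congr 1
      · rw [Real.exp_nat_mul, Real.exp_log hk']
      · exact Finset.prod_congr rfl fun i _ => by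
          rw [Real.exp_nat_mul, Real.exp_log (hp i)]
    rw [hKL, hc]
    push_cast
    ring
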